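/- Let G = (V,E) be a finite simple graph with no isolated vertices, let Γ_G = (N,γ) be the independent set game on G, and let {x_S}_{S ⊆ N, S ≠ ∅} be a population monotonic allocation scheme of Γ_G. If v* is a vertex whose distance to every pendant vertex of G is greater than two, then there is at most one neighbor u ∈ N(v*) with |N(u,v*)| ≤ 1, where N(u,v*) = {w ∈ V : N(w) = {u,v*}}. -/

import Mathlib

open Finset

variable {V : Type*} [Fintype V] [DecidableEq V]

/-- `I` is an independent set of the graph `G`. -/
def Indep (G : SimpleGraph V) (I : Finset V) : Prop :=
  ∀ u ∈ I, ∀ v ∈ I, ¬ G.Adj u v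

/-- The independence number of `G` restricted to the vertex set `U`,
i.e. `α(G[U])`: the maximum size of an independent set contained in `U`. -/
noncomputable def alphaOn (G : SimpleGraph V) (U : Set V) : ℕ :=
  sSup {n : ℕ | ∃ I : Finset V, ↑I ⊆ U ∧ Indep G I ∧ I.card = n}

/-- `δ(v)`: the set of edges of `G` incident to the vertex `v`. -/
def incEdges (G : SimpleGraph V) (v : V) : Set (Sym2 V) :=
  {e | e ∈ G.edgeSet ∧ v ∈ e}

/-- `δ(v)` as a finset. -/
def incFinset (G : SimpleGraph V) [DecidableRel G.Adj] (v : V) : Finset (Sym2 V) :=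
  G.edgeFinset.filter (fun e => v ∈ e)

/-- `V⟨S⟩`: the set of vertices of `G` all of whose incident edges lie in `S`. -/
def onlyInc (G : SimpleGraph V) (S : Set (Sym2 V)) : Set V :=
  {v | incEdges G v ⊆ S}

/-- The characteristic function of the independent set game on `G`:
`γ(S) = α(G[V⟨S⟩])`. -/
noncomputable def gammaIS (G : SimpleGraph V) (S : Finset (Sym2 V)) : ℕ :=
  alphaOn G (onlyInc G ↑S)

/-- `x` is a population monotonic allocation scheme (PMAS) of the independent set
game on `G`: it is nonnegative, efficient, and monotone.  Coalitions are the
nonempty subsets of the player set `N = E(G)` (`G.edgeFinset`). -/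
def IsPMAS (G : SimpleGraph V) [DecidableRel G.Adj]
    (x : Finset (Sym2 V) → Sym2 V → ℝ) : Prop :=
  (∀ S ⊆ G.edgeFinset, ∀ i ∈ S, 0 ≤ x S i) ∧
  (∀ S ⊆ G.edgeFinset, S.Nonempty → ∑ i ∈ S, x S i = (gammaIS G S : ℝ)) ∧
  (∀ S T : Finset (Sym2 V), S ⊆ T → T ⊆ G.edgeFinset → S.Nonempty →
    ∀ i ∈ S, x S i ≤ x T i)

/-- An edge of `G` is pendant if one of its endpoints has degree one. -/
def PendantEdge (G : SimpleGraph V) [DecidableRel G.Adj] (e : Sym2 V) : Prop :=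
  e ∈ G.edgeSet ∧ ∃ v ∈ e, G.degree v = 1

/-- A non-pendant edge of type I: not incident to any pendant edge. -/
def TypeI (G : SimpleGraph V) [DecidableRel G.Adj] (e : Sym2 V) : Prop :=
  e ∈ G.edgeSet ∧ ¬ PendantEdge G e ∧
    ∀ f : Sym2 V, PendantEdge G f → ¬ ∃ w : V, w ∈ e ∧ w ∈ f

/-- A non-pendant edge of type II: incident to some pendant edge. -/
def TypeII (G : SimpleGraph V) [DecidableRel G.Adj] (e : Sym2 V) : Prop :=
  e ∈ G.edgeSet ∧ ¬ PendantEdge G e ∧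
    ∃ f : Sym2 V, PendantEdge G f ∧ ∃ w : V, w ∈ e ∧ w ∈ f

/-- The vertex `v` has distance at most two to some pendant vertex of `G`. -/
def NearPendant (G : SimpleGraph V) [DecidableRel G.Adj] (v : V) : Prop :=
  ∃ p : V, G.degree p = 1 ∧ ∃ w : G.Walk v p, w.length ≤ 2

set_option linter.unusedSectionVars false

lemma mem_onlyInc_iff (G : SimpleGraph V) (S : Set (Sym2 V)) (w : V) :
    w ∈ onlyInc G S ↔ ∀ z, G.Adj w z → s(w, z) ∈ S := by
  constructor
  · intro h z hz
    exact h ⟨hz, Sym2.mem_mk_left w z⟩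
  · intro h e he
    obtain ⟨he1, he2⟩ := he
    induction e with
    | _ a b =>
      rw [Sym2.mem_iff] at he2
      rcases he2 with rfl | rfl
      · exact h b he1
      · rw [Sym2.eq_swap]
        exact h a (G.adj_symm he1)

lemma mem_incFinset (G : SimpleGraph V) [DecidableRel G.Adj] (a : V) (e : Sym2 V) :
    e ∈ incFinset G a ↔ e ∈ G.edgeSet ∧ a ∈ e := by
  simp [incFinset, SimpleGraph.mem_edgeFinset]

lemma alphaOn_eq_one (G : SimpleGraph V) (U : Set V) (v0 : V) (hv0 : v0 ∈ U)
    (h : ∀ a ∈ U, ∀ b ∈ U, ¬ G.Adj a b → a = b) : alphaOn G U = 1 := by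
  have hsub : {n : ℕ | ∃ I : Finset V, ↑I ⊆ U ∧ Indep G I ∧ I.card = n} ⊆ {n | n ≤ 1} := by
    rintro n ⟨I, hIU, hI, rfl⟩
    refine Finset.card_le_one.mpr (fun a ha b hb => ?_)
    exact h a (hIU ha) b (hIU hb) (hI a ha b hb)
  have h1 : 1 ∈ {n : ℕ | ∃ I : Finset V, ↑I ⊆ U ∧ Indep G I ∧ I.card = n} := by
    refine ⟨{v0}, by simpa using hv0, ?_, by simp⟩
    intro a ha b hb
    simp only [Finset.mem_singleton] at ha hb
    subst ha; subst hb
    exact G.irrefl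
  unfold alphaOn
  apply le_antisymm
  · exact csSup_le ⟨1, h1⟩ (fun n hn => hsub hn)
  · exact le_csSup ⟨1, fun n hn => hsub hn⟩ h1

lemma degree_eq_one_of_forall (G : SimpleGraph V) [DecidableRel G.Adj] (w t : V)
    (hadj : G.Adj w t) (h : ∀ z, G.Adj w z → z = t) : G.degree w = 1 := by
  have hN : G.neighborFinset w = {t} :=
    Finset.eq_singleton_iff_unique_mem.mpr ⟨by simpa using hadj,
      fun y hy => h y (by simpa using hy)⟩
  rw [SimpleGraph.degree, hN, Finset.card_singleton]

/-- Let `x` be a PMAS of the independent set game on `G` (a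
graph with no isolated vertices).  If the vertex `v*` has distance greater than
two to every pendant vertex of `G`, then there is at most one neighbor
`u ∈ N(v*)` with `|N(u, v*)| ≤ 1`. -/
theorem stmt_14 (G : SimpleGraph V) [DecidableRel G.Adj]
    (hiso : ∀ w : V, G.degree w ≠ 0)
    (x : Finset (Sym2 V) → Sym2 V → ℝ) (hx : IsPMAS G x)
    (vstar : V)
    (hfar : ∀ p : V, G.degree p = 1 → ¬ ∃ w : G.Walk vstar p, w.length ≤ 2) :
    {u : V | G.Adj vstar u ∧
      {w : V | G.neighborSet w = {u, vstar}}.Subsingleton}.Subsingleton := by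
  obtain ⟨hnn, heff, hmono⟩ := hx
  -- every vertex has a neighbor
  have hnbr : ∀ w : V, ∃ z, G.Adj w z := by
    intro w
    have := Nat.pos_of_ne_zero (hiso w)
    rw [← SimpleGraph.card_neighborFinset_eq_degree] at this
    obtain ⟨z, hz⟩ := Finset.card_pos.mp this
    exact ⟨z, by simpa using hz⟩
  -- no vertex whose only neighbor is vstar
  have hcon1 : ∀ w : V, G.Adj w vstar → (∀ z, G.Adj w z → z = vstar) → False := by
    intro w hadj h
    exact hfar w (degree_eq_one_of_forall G w vstar hadj h)
      ⟨SimpleGraph.Walk.cons (G.adj_symm hadj) SimpleGraph.Walk.nil, by simp⟩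
  -- no vertex whose only neighbor is a neighbor u of vstar
  have hcon2 : ∀ u : V, G.Adj vstar u → ∀ w : V, G.Adj w u →
      (∀ z, G.Adj w z → z = u) → False := by
    intro u hu w hadj h
    refine hfar w (degree_eq_one_of_forall G w u hadj h)
      ⟨SimpleGraph.Walk.cons hu (SimpleGraph.Walk.cons (G.adj_symm hadj) SimpleGraph.Walk.nil),
        by simp⟩
  set A := incFinset G vstar with hAdef
  have hAE : A ⊆ G.edgeFinset := Finset.filter_subset _ _
  have hVA : ∀ w ∈ onlyInc G (↑A : Set (Sym2 V)), w = vstar := by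
    intro w hw
    rw [mem_onlyInc_iff] at hw
    by_contra hwv
    have hN : ∀ z, G.Adj w z → z = vstar := by
      intro z hz
      have := ((mem_incFinset G vstar _).mp (by exact_mod_cast hw z hz)).2
      rw [Sym2.mem_iff] at this
      rcases this with h | h
      · exact absurd h.symm hwv
      · exact h.symm
    obtain ⟨z, hz⟩ := hnbr w
    exact hcon1 w ((hN z hz) ▸ hz) hN
  have hvmem : vstar ∈ onlyInc G (↑A : Set (Sym2 V)) := by
    rw [mem_onlyInc_iff]
    intro z hz
    exact_mod_cast (mem_incFinset G vstar _).mpr ⟨hz, Sym2.mem_mk_left _ _⟩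
  have hgA : gammaIS G A = 1 :=
    alphaOn_eq_one G _ vstar hvmem
      (fun a ha b hb _ => (hVA a ha).trans (hVA b hb).symm)
  have hsA' : ∀ hAne : A.Nonempty, ∑ i ∈ A, x A i = 1 := by
    intro hAne
    rw [heff A hAE hAne, hgA]; norm_num
  -- key claim
  have key : ∀ u : V, G.Adj vstar u →
      {w : V | G.neighborSet w = {u, vstar}}.Subsingleton →
      1 ≤ x A s(vstar, u) := by
    intro u hadj hsub
    set D := incFinset G u with hDdef
    set B := A ∪ D with hBdef
    set e : Sym2 V := s(vstar, u) with hedef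
    have hDE : D ⊆ G.edgeFinset := Finset.filter_subset _ _
    have hBE : B ⊆ G.edgeFinset := Finset.union_subset hAE hDE
    have heA : e ∈ A := (mem_incFinset G vstar e).mpr ⟨hadj, Sym2.mem_mk_left _ _⟩
    have heD : e ∈ D := (mem_incFinset G u e).mpr ⟨hadj, Sym2.mem_mk_right _ _⟩
    have hAne : A.Nonempty := ⟨e, heA⟩
    have hsA : ∑ i ∈ A, x A i = 1 := hsA' hAne
    have hDne : D.Nonempty := ⟨e, heD⟩
    -- classification of members of onlyInc ↑A
    -- classification of members of onlyInc ↑D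
    have hVD : ∀ w ∈ onlyInc G (↑D : Set (Sym2 V)), w = u := by
      intro w hw
      rw [mem_onlyInc_iff] at hw
      by_contra hwu
      have hN : ∀ z, G.Adj w z → z = u := by
        intro z hz
        have := ((mem_incFinset G u _).mp (by exact_mod_cast hw z hz)).2
        rw [Sym2.mem_iff] at this
        rcases this with h | h
        · exact absurd h.symm hwu
        · exact h.symm
      obtain ⟨z, hz⟩ := hnbr w
      exact hcon2 u hadj w ((hN z hz) ▸ hz) hN
    -- classification of members of onlyInc ↑B
    have hVB : ∀ w ∈ onlyInc G (↑B : Set (Sym2 V)),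
        w = vstar ∨ w = u ∨ G.neighborSet w = {u, vstar} := by
      intro w hw
      rw [mem_onlyInc_iff] at hw
      by_cases hwv : w = vstar
      · exact Or.inl hwv
      by_cases hwu : w = u
      · exact Or.inr (Or.inl hwu)
      have hN : ∀ z, G.Adj w z → z = vstar ∨ z = u := by
        intro z hz
        have hm := hw z hz
        rw [hBdef] at hm
        push_cast at hm
        rcases hm with hm | hm
        · have := ((mem_incFinset G vstar _).mp (by exact_mod_cast hm)).2
          rw [Sym2.mem_iff] at this
          rcases this with h | h
          · exact absurd h.symm hwv
          · exact Or.inl h.symm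
        · have := ((mem_incFinset G u _).mp (by exact_mod_cast hm)).2
          rw [Sym2.mem_iff] at this
          rcases this with h | h
          · exact absurd h.symm hwu
          · exact Or.inr h.symm
      by_cases hav : G.Adj w vstar
      · by_cases hau : G.Adj w u
        · refine Or.inr (Or.inr ?_)
          ext z
          simp only [SimpleGraph.mem_neighborSet, Set.mem_insert_iff, Set.mem_singleton_iff]
          constructor
          · intro hz
            rcases hN z hz with h | h
            · exact Or.inr h
            · exact Or.inl h
          · rintro (rfl | rfl)
            · exact hau
            · exact hav
        · exfalso
          apply hcon1 w hav
          intro z hz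
          rcases hN z hz with h | h
          · exact h
          · exact absurd (h ▸ hz) hau
      · exfalso
        have hN' : ∀ z, G.Adj w z → z = u := by
          intro z hz
          rcases hN z hz with h | h
          · exact absurd (h ▸ hz) hav
          · exact h
        obtain ⟨z, hz⟩ := hnbr w
        exact hcon2 u hadj w ((hN' z hz) ▸ hz) hN'
    -- gamma values
    have humem : u ∈ onlyInc G (↑D : Set (Sym2 V)) := by
      rw [mem_onlyInc_iff]
      intro z hz
      exact_mod_cast (mem_incFinset G u _).mpr ⟨hz, Sym2.mem_mk_left _ _⟩
    have hvmemB : vstar ∈ onlyInc G (↑B : Set (Sym2 V)) := by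
      rw [mem_onlyInc_iff]
      intro z hz
      have : s(vstar, z) ∈ B := Finset.mem_union_left _
        ((mem_incFinset G vstar _).mpr ⟨hz, Sym2.mem_mk_left _ _⟩)
      exact_mod_cast this
    have hgD : gammaIS G D = 1 :=
      alphaOn_eq_one G _ u humem
        (fun a ha b hb _ => (hVD a ha).trans (hVD b hb).symm)
    have hgB : gammaIS G B = 1 := by
      refine alphaOn_eq_one G _ vstar hvmemB ?_
      intro a ha b hb hab
      have hWadj : ∀ c, G.neighborSet c = {u, vstar} →
          G.Adj c u ∧ G.Adj c vstar := by
        intro c hc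
        constructor
        · have : u ∈ G.neighborSet c := by rw [hc]; left; rfl
          exact this
        · have : vstar ∈ G.neighborSet c := by rw [hc]; right; rfl
          exact this
      rcases hVB a ha with rfl | rfl | hWa <;> rcases hVB b hb with rfl | rfl | hWb
      · rfl
      · exact absurd hadj hab
      · exact absurd (G.adj_symm (hWadj b hWb).2) hab
      · exact absurd (G.adj_symm hadj) hab
      · rfl
      · exact absurd (G.adj_symm (hWadj b hWb).1) hab
      · exact absurd (hWadj a hWa).2 hab
      · exact absurd (hWadj a hWa).1 hab
      · exact hsub hWa hWb
    -- sums
    have hsB : ∑ i ∈ B, x B i = 1 := by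
      rw [heff B hBE ⟨e, Finset.mem_union_left _ heA⟩, hgB]; norm_num
    have hsD : ∑ i ∈ D, x D i = 1 := by
      rw [heff D hDE hDne, hgD]; norm_num
    have hABle : ∑ i ∈ A, x B i ≤ 1 := by
      rw [← hsB]
      exact Finset.sum_le_sum_of_subset_of_nonneg Finset.subset_union_left
        (fun i hi _ => hnn B hBE i hi)
    have hmonoAB : ∀ i ∈ A, x A i ≤ x B i :=
      fun i hi => hmono A B Finset.subset_union_left hBE hAne i hi
    have hABge : 1 ≤ ∑ i ∈ A, x B i := by
      rw [← hsA]
      exact Finset.sum_le_sum hmonoAB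
    have hABeq : ∑ i ∈ A, x B i = 1 := le_antisymm hABle hABge
    -- termwise equality on A
    have hterm : ∀ i ∈ A, x B i = x A i := by
      have h0 : ∑ i ∈ A, (x B i - x A i) = 0 := by
        rw [Finset.sum_sub_distrib, hABeq, hsA]; ring
      intro i hi
      have := (Finset.sum_eq_zero_iff_of_nonneg
        (fun j hj => sub_nonneg.mpr (hmonoAB j hj))).mp h0 i hi
      linarith [this]
    -- zero outside A
    have hzero : ∀ f ∈ B \ A, x B f = 0 := by
      have hsd : ∑ f ∈ B \ A, x B f + ∑ i ∈ A, x B i = ∑ i ∈ B, x B i :=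
        Finset.sum_sdiff Finset.subset_union_left
      have hsum0 : ∑ f ∈ B \ A, x B f = 0 := by
        rw [hABeq, hsB] at hsd; linarith
      exact fun f hf => (Finset.sum_eq_zero_iff_of_nonneg
        (fun j hj => hnn B hBE j (Finset.sdiff_subset hj))).mp hsum0 f hf
    -- D \ {e} part is nonpositive
    have hvu : vstar ≠ u := G.ne_of_adj hadj
    have hrest : ∑ f ∈ D \ {e}, x D f ≤ 0 := by
      apply Finset.sum_nonpos
      intro f hf
      obtain ⟨hfD, hfne⟩ := Finset.mem_sdiff.mp hf
      rw [Finset.mem_singleton] at hfne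
      have hfB : f ∈ B \ A := by
        refine Finset.mem_sdiff.mpr ⟨Finset.mem_union_right _ hfD, fun hfA => hfne ?_⟩
        have h1 := (mem_incFinset G vstar f).mp hfA
        have h2 := (mem_incFinset G u f).mp hfD
        exact (Sym2.mem_and_mem_iff hvu).mp ⟨h1.2, h2.2⟩
      calc x D f ≤ x B f := hmono D B Finset.subset_union_right hBE hDne f hfD
        _ = 0 := hzero f hfB
    have hDsplit : x D e + ∑ f ∈ D \ {e}, x D f = 1 := by
      rw [← hsD, ← Finset.sum_sdiff (Finset.singleton_subset_iff.mpr heD)]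
      simp [add_comm]
    have hDe : 1 ≤ x D e := by linarith
    calc (1 : ℝ) ≤ x D e := hDe
      _ ≤ x B e := hmono D B Finset.subset_union_right hBE hDne e heD
      _ = x A e := hterm e heA
  -- finish
  intro u1 hu1 u2 hu2
  by_contra hne
  obtain ⟨h1adj, h1sub⟩ := hu1
  obtain ⟨h2adj, h2sub⟩ := hu2
  have k1 := key u1 h1adj h1sub
  have k2 := key u2 h2adj h2sub
  have he12 : s(vstar, u1) ≠ s(vstar, u2) := by
    intro h
    rw [Sym2.eq_iff] at h
    rcases h with h | h
    · exact hne h.2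
    · exact G.ne_of_adj h2adj h.1
  have he1A : s(vstar, u1) ∈ A := (mem_incFinset G vstar _).mpr ⟨h1adj, Sym2.mem_mk_left _ _⟩
  have he2A : s(vstar, u2) ∈ A := (mem_incFinset G vstar _).mpr ⟨h2adj, Sym2.mem_mk_left _ _⟩
  have hAne : A.Nonempty := ⟨_, he1A⟩
  have hsA : ∑ i ∈ A, x A i = 1 := hsA' hAne
  have hpair : x A s(vstar, u1) + x A s(vstar, u2) ≤ ∑ i ∈ A, x A i := by
    rw [← Finset.sum_pair he12]
    refine Finset.sum_le_sum_of_subset_of_nonneg ?_ (fun i hi _ => hnn A hAE i hi)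
    intro i hi
    rcases Finset.mem_insert.mp hi with rfl | hi
    · exact he1A
    · exact (Finset.mem_singleton.mp hi) ▸ he2A
  linarith
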